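/- Let σ > 0 with σ ≠ 1, α ≠ 0, and let B, Y, w, δ, P^k, Γ^K, h be positive reals, m ∈ (0,1), J* real. Define K = B^{σ-1}·Y·(δ·P^k/P^c)^{-σ}·(1−m)·(Γ^K)^{σ-1}, N = B^{σ-1}·Y·(w/P^c)^{-σ}·e^{α(σ-1)J*}·(e^{α(σ-1)m} − 1)/(α(σ−1)), and let P^c satisfy (P^c)^{1-σ} = B^{σ-1}·[ (1−m)·(δP^k/Γ^K)^{1-σ} + (w·e^{-αJ*})^{1-σ}·(e^{α(σ-1)m} − 1)/(α(σ−1)) ]. Set ω̄ = (1−m)^{1/σ} + ((e^{α(σ-1)m} − 1)/(α(σ−1)))^{1/σ}, ω^k = (1−m)^{1/σ}/ω̄, and B̃ = B·ω̄^{σ/(σ-1)}. Then Y = B̃·[ ω^k·(Γ^K·K)^{(σ-1)/σ} + (1−ω^k)·(e^{αJ*}·N)^{(σ-1)/σ} ]^{σ/(σ-1)}. -/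

import Mathlib

/-- The aggregate CES production function of the task-based model (paper equation (7)). -/
theorem aggregate_CES_production_function
    (σ α B Y w δ Pk ΓK h : ℝ)
    (hσ : 0 < σ) (hσ1 : σ ≠ 1) (hα : α ≠ 0)
    (hB : 0 < B) (hY : 0 < Y) (hw : 0 < w) (hδ : 0 < δ) (hPk : 0 < Pk)
    (hΓ : 0 < ΓK) (hh : 0 < h)
    (m Jstar : ℝ) (hm : m ∈ Set.Ioo (0:ℝ) 1)
    (K N Pc ωbar ωk Bt : ℝ) (hPc : 0 < Pc)
    (hK : K = B ^ (σ - 1) * Y * (δ * Pk / Pc) ^ (-σ) * (1 - m) * ΓK ^ (σ - 1))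
    (hN : N = B ^ (σ - 1) * Y * (w / Pc) ^ (-σ) * Real.exp (α * (σ - 1) * Jstar) *
      ((Real.exp (α * (σ - 1) * m) - 1) / (α * (σ - 1))))
    (hPceq : Pc ^ (1 - σ) = B ^ (σ - 1) *
      ((1 - m) * (δ * Pk / ΓK) ^ (1 - σ) +
        (w * Real.exp (-α * Jstar)) ^ (1 - σ) *
          ((Real.exp (α * (σ - 1) * m) - 1) / (α * (σ - 1)))))
    (hωbar : ωbar = (1 - m) ^ (1/σ) +
      ((Real.exp (α * (σ - 1) * m) - 1) / (α * (σ - 1))) ^ (1/σ))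
    (hωk : ωk = (1 - m) ^ (1/σ) / ωbar)
    (hBt : Bt = B * ωbar ^ (σ / (σ - 1))) :
    Y = Bt * (ωk * (ΓK * K) ^ ((σ - 1) / σ) +
      (1 - ωk) * (Real.exp (α * Jstar) * N) ^ ((σ - 1) / σ)) ^ (σ / (σ - 1)) := by
  obtain ⟨hm0, hm1⟩ := hm
  have hm' : (0:ℝ) < 1 - m := by linarith
  have hσ1' : σ - 1 ≠ 0 := sub_ne_zero.mpr hσ1
  have hc0 : α * (σ - 1) ≠ 0 := mul_ne_zero hα hσ1'
  set E := (Real.exp (α * (σ - 1) * m) - 1) / (α * (σ - 1)) with hEdef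
  have hE : 0 < E := by
    rcases lt_or_gt_of_ne hc0 with hlt | hgt
    · apply div_pos_of_neg_of_neg _ hlt
      have hx : α * (σ - 1) * m < 0 := mul_neg_of_neg_of_pos hlt hm0
      have := Real.exp_lt_one_iff.mpr hx
      linarith
    · apply div_pos _ hgt
      have hx : 0 < α * (σ - 1) * m := mul_pos hgt hm0
      have := Real.one_lt_exp_iff.mpr hx
      linarith
  have hωbar0 : 0 < ωbar := by
    rw [hωbar]
    have h1 := Real.rpow_pos_of_pos hm' (1/σ)
    have h2 := Real.rpow_pos_of_pos hE (1/σ)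
    linarith
  have eB := (Real.exp_log hB).symm
  have eY := (Real.exp_log hY).symm
  have ew := (Real.exp_log hw).symm
  have eδ := (Real.exp_log hδ).symm
  have ePk := (Real.exp_log hPk).symm
  have eΓ := (Real.exp_log hΓ).symm
  have ePc := (Real.exp_log hPc).symm
  have em := (Real.exp_log hm').symm
  have eE := (Real.exp_log hE).symm
  have eω := (Real.exp_log hωbar0).symm
  set C := B ^ ((σ - 1) * (σ - 1) / σ) * Y ^ ((σ - 1) / σ) * Pc ^ (σ - 1) with hC
  set a := (1 - m) * (δ * Pk / ΓK) ^ (1 - σ) with ha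
  set b := (w * Real.exp (-α * Jstar)) ^ (1 - σ) * E with hb
  have h1ωk : 1 - ωk = E ^ (1/σ) / ωbar := by
    rw [hωk, eq_div_iff hωbar0.ne', sub_mul, one_mul,
      div_mul_cancel₀ _ hωbar0.ne', hωbar]
    ring
  have hT1 : ωk * (ΓK * K) ^ ((σ - 1) / σ) = C * a / ωbar := by
    rw [hωk, hK, hC, ha, div_mul_eq_mul_div]
    congr 1
    rw [eB, eY, eδ, ePk, eΓ, ePc, em]
    simp only [← Real.exp_sub, ← Real.exp_add, ← Real.exp_mul]
    rw [Real.exp_eq_exp]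
    field_simp
    ring
  have hT2 : (1 - ωk) * (Real.exp (α * Jstar) * N) ^ ((σ - 1) / σ) = C * b / ωbar := by
    rw [h1ωk, hN, hC, hb, div_mul_eq_mul_div]
    congr 1
    rw [eB, eY, ew, ePc, eE]
    simp only [← Real.exp_sub, ← Real.exp_add, ← Real.exp_mul]
    rw [Real.exp_eq_exp]
    field_simp
    ring
  have hsum : ωk * (ΓK * K) ^ ((σ - 1) / σ) +
      (1 - ωk) * (Real.exp (α * Jstar) * N) ^ ((σ - 1) / σ) =
      (Y / B) ^ ((σ - 1) / σ) / ωbar := by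
    rw [hT1, hT2, ← add_div, ← mul_add]
    congr 1
    have hBpow : B ^ (σ - 1) ≠ 0 := (Real.rpow_pos_of_pos hB _).ne'
    have hab : a + b = Pc ^ (1 - σ) / B ^ (σ - 1) := by
      rw [eq_div_iff hBpow, mul_comm, ← hPceq]
    rw [hab, hC, eB, eY, ePc]
    simp only [← Real.exp_sub, ← Real.exp_add, ← Real.exp_mul]
    rw [Real.exp_eq_exp]
    field_simp
    ring
  rw [hsum, hBt, eB, eY, eω]
  simp only [← Real.exp_sub, ← Real.exp_add, ← Real.exp_mul]
  rw [Real.exp_eq_exp]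
  field_simp
  ring
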